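/- Let $d\ge1$, $-1 \le B < A \le 1$, and let $(j_n)_{n\ge1}$ be strictly increasing positive reals with $\sum_{n\ge1} j_n^{-(d+1)} < \infty$. Suppose $r \in (0,j_1)$ satisfies $\varphi(r) > 1 - \frac{A-B}{1+|B|}$, where $\varphi(r) = 1 - (d+1)\sum_{n\ge1}\frac{r^{d+1}}{j_n^{d+1}-r^{d+1}}$. Then for all complex $z$ with $|z| \le r$, $\left|\frac{\Phi(z)-1}{A - B\,\Phi(z)}\right| < 1$, where $\Phi(z) = 1 - (d+1)\sum_{n\ge1}\frac{z^{d+1}}{j_n^{d+1}-z^{d+1}}$. -/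

import Mathlib

theorem stmt_10 (d : ℕ) (hd : 1 ≤ d) (A B : ℝ) (hB : -1 ≤ B) (hBA : B < A) (hA : A ≤ 1)
    (j : ℕ → ℝ) (hj : StrictMono j) (hjpos : ∀ n, 0 < j n)
    (hsum : Summable fun n => ((j n) ^ (d + 1))⁻¹)
    (φ : ℝ → ℝ)
    (hφ : ∀ s : ℝ, φ s = 1 - ((d : ℝ) + 1) * ∑' n, s ^ (d + 1) / ((j n) ^ (d + 1) - s ^ (d + 1)))
    (r : ℝ) (hr : r ∈ Set.Ioo (0 : ℝ) (j 0))
    (hcond : φ r > 1 - (A - B) / (1 + |B|))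
    (Φ : ℂ → ℂ)
    (hΦ : ∀ w : ℂ, ‖w‖ < j 0 →
      Φ w = 1 - ((d : ℂ) + 1) * ∑' n, w ^ (d + 1) / (((j n : ℂ)) ^ (d + 1) - w ^ (d + 1))) :
    ∀ z : ℂ, ‖z‖ ≤ r →
      ‖(Φ z - 1) / ((A : ℂ) - (B : ℂ) * Φ z)‖ < 1 := by
  obtain ⟨hr0, hrj⟩ := hr
  have hm0 : d + 1 ≠ 0 := Nat.succ_ne_zero d
  have hjr : ∀ n, r < j n := fun n => lt_of_lt_of_le hrj (hj.monotone (Nat.zero_le n))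
  have hden : ∀ n, 0 < j n ^ (d + 1) - r ^ (d + 1) := fun n =>
    sub_pos.mpr (pow_lt_pow_left₀ (hjr n) hr0.le hm0)
  have hrm : 0 < r ^ (d + 1) := pow_pos hr0 _
  have hgnn : ∀ n, 0 ≤ r ^ (d + 1) / (j n ^ (d + 1) - r ^ (d + 1)) := fun n =>
    le_of_lt (div_pos hrm (hden n))
  have hδ : 0 < j 0 ^ (d + 1) - r ^ (d + 1) := hden 0
  have hgle : ∀ n, r ^ (d + 1) / (j n ^ (d + 1) - r ^ (d + 1)) ≤
      (r ^ (d + 1) * j 0 ^ (d + 1) / (j 0 ^ (d + 1) - r ^ (d + 1))) * (j n ^ (d + 1))⁻¹ := by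
    intro n
    have ha : 0 < j n ^ (d + 1) := pow_pos (hjpos n) _
    have hj0n : j 0 ^ (d + 1) ≤ j n ^ (d + 1) :=
      pow_le_pow_left₀ (hjpos 0).le (hj.monotone (Nat.zero_le n)) _
    rw [← div_eq_mul_inv, div_le_div_iff₀ (hden n) ha, div_mul_eq_mul_div, le_div_iff₀ hδ]
    nlinarith [mul_le_mul_of_nonneg_left hj0n (le_of_lt (mul_pos hrm hrm))]
  have hgsum : Summable (fun n => r ^ (d + 1) / (j n ^ (d + 1) - r ^ (d + 1))) :=
    Summable.of_nonneg_of_le hgnn hgle (hsum.mul_left _)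
  set T : ℝ := ∑' n, r ^ (d + 1) / (j n ^ (d + 1) - r ^ (d + 1)) with hT
  have hT0 : 0 ≤ T := tsum_nonneg hgnn
  set t : ℝ := ((d : ℝ) + 1) * T with ht
  have ht0 : 0 ≤ t := mul_nonneg (by positivity) hT0
  have habs : (0 : ℝ) < 1 + |B| := by positivity
  have htlt : t < (A - B) / (1 + |B|) := by
    have := hcond
    rw [hφ r] at this
    linarith
  have htAB : t * (1 + |B|) < A - B := (lt_div_iff₀ habs).mp htlt
  intro z hz
  have hzn : ‖z‖ ≤ r := by exact hz
  have hΦz := hΦ z (lt_of_le_of_lt hz hrj)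
  set c : ℕ → ℂ := fun n => z ^ (d + 1) / (((j n : ℂ)) ^ (d + 1) - z ^ (d + 1)) with hc
  have hcnorm : ∀ n, ‖c n‖ ≤ r ^ (d + 1) / (j n ^ (d + 1) - r ^ (d + 1)) := by
    intro n
    have hnum : ‖z ^ (d + 1)‖ ≤ r ^ (d + 1) := by
      rw [norm_pow]; exact pow_le_pow_left₀ (norm_nonneg z) hzn _
    have hjn : ‖((j n : ℂ)) ^ (d + 1)‖ = j n ^ (d + 1) := by
      rw [norm_pow, Complex.norm_real, Real.norm_eq_abs, abs_of_pos (hjpos n)]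
    have hdc : j n ^ (d + 1) - r ^ (d + 1) ≤ ‖((j n : ℂ)) ^ (d + 1) - z ^ (d + 1)‖ := by
      have h := norm_sub_norm_le (((j n : ℂ)) ^ (d + 1)) (z ^ (d + 1))
      rw [hjn] at h
      linarith
    have : ‖c n‖ = ‖z ^ (d + 1)‖ / ‖((j n : ℂ)) ^ (d + 1) - z ^ (d + 1)‖ := by
      rw [hc]; exact norm_div _ _
    rw [this]
    exact div_le_div₀ hrm.le hnum (hden n) hdc
  have hcn_sum : Summable (fun n => ‖c n‖) :=
    Summable.of_nonneg_of_le (fun n => norm_nonneg _) hcnorm hgsum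
  have hS : ‖∑' n, c n‖ ≤ T :=
    (norm_tsum_le_tsum_norm hcn_sum).trans (Summable.tsum_le_tsum hcnorm hcn_sum hgsum)
  have hu : Φ z - 1 = -(((d : ℂ) + 1) * ∑' n, c n) := by rw [hΦz]; ring
  have hnorm_d : ‖((d : ℂ) + 1)‖ = (d : ℝ) + 1 := by
    rw [show ((d : ℂ) + 1) = (((d : ℝ) + 1 : ℝ) : ℂ) by push_cast; ring,
      Complex.norm_real, Real.norm_eq_abs, abs_of_pos (by positivity)]
  have huB : ‖Φ z - 1‖ ≤ t := by
    rw [hu, norm_neg, norm_mul, hnorm_d, ht]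
    exact mul_le_mul_of_nonneg_left hS (by positivity)
  have hAB : (A : ℂ) - (B : ℂ) * Φ z = ((A : ℂ) - (B : ℂ)) - (B : ℂ) * (Φ z - 1) := by ring
  have hABnorm : ‖(A : ℂ) - (B : ℂ)‖ = A - B := by
    rw [show ((A : ℂ) - (B : ℂ)) = (((A - B : ℝ)) : ℂ) by push_cast; ring,
      Complex.norm_real, Real.norm_eq_abs, abs_of_pos (by linarith)]
  have hDnorm : (A - B) - |B| * t ≤ ‖(A : ℂ) - (B : ℂ) * Φ z‖ := by
    have h1 : ‖(B : ℂ) * (Φ z - 1)‖ ≤ |B| * t := by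
      rw [norm_mul, Complex.norm_real, Real.norm_eq_abs]
      exact mul_le_mul_of_nonneg_left huB (abs_nonneg B)
    have h2 := norm_sub_norm_le ((A : ℂ) - (B : ℂ)) ((B : ℂ) * (Φ z - 1))
    rw [hABnorm] at h2
    rw [hAB]
    linarith
  have hden_pos : t < ‖(A : ℂ) - (B : ℂ) * Φ z‖ := by
    have : t < (A - B) - |B| * t := by nlinarith
    linarith
  have h0 : 0 < ‖(A : ℂ) - (B : ℂ) * Φ z‖ := lt_of_le_of_lt ht0 hden_pos
  rw [norm_div, div_lt_one h0]
  exact lt_of_le_of_lt huB hden_pos
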